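/- Let S be a completely simple semigroup with n ≥ 3 minimal left ideals. Then every vertex of In(S) has even degree (so In(S) is Eulerian since it is connected). -/

import Mathlib

open Set

variable {S : Type*}

/-- A left ideal of a semigroup: a nonempty subset `I` with `S * I ⊆ I`. -/
def IsLeftIdeal [Semigroup S] (I : Set S) : Prop :=
  I.Nonempty ∧ ∀ s : S, ∀ x ∈ I, s * x ∈ I

/-- A nontrivial left ideal is a left ideal different from `S`. -/
def IsNontrivialLeftIdeal [Semigroup S] (I : Set S) : Prop :=
  IsLeftIdeal I ∧ I ≠ Set.univ

/-- A minimal left ideal: a nontrivial left ideal properly containing no left ideal. -/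
def IsMinimalLeftIdeal [Semigroup S] (I : Set S) : Prop :=
  IsNontrivialLeftIdeal I ∧ ∀ J : Set S, IsLeftIdeal J → J ⊆ I → J = I

/-- A maximal left ideal: a nontrivial left ideal properly contained in no
nontrivial left ideal. -/
def IsMaximalLeftIdeal [Semigroup S] (I : Set S) : Prop :=
  IsNontrivialLeftIdeal I ∧ ∀ J : Set S, IsNontrivialLeftIdeal J → I ⊆ J → J = I

/-- Vertices of the inclusion ideal graph: the nontrivial left ideals of `S`. -/
def IdealVert (S : Type*) [Semigroup S] := {I : Set S // IsNontrivialLeftIdeal I}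

/-- The inclusion ideal graph of a semigroup: distinct nontrivial left ideals are
adjacent iff one properly contains the other. -/
def inclusionIdealGraph (S : Type*) [Semigroup S] : SimpleGraph (IdealVert S) :=
  SimpleGraph.fromRel (fun I J => I.1 ⊂ J.1)

/-- A (two-sided) ideal of a semigroup. -/
def IsIdeal [Semigroup S] (I : Set S) : Prop :=
  I.Nonempty ∧ (∀ s : S, ∀ x ∈ I, s * x ∈ I) ∧ (∀ s : S, ∀ x ∈ I, x * s ∈ I)

/-- A completely simple semigroup: simple (no proper two-sided ideal) and containing
a primitive idempotent. -/
def IsCompletelySimple (S : Type*) [Semigroup S] : Prop :=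
  (∀ I : Set S, IsIdeal I → I = Set.univ) ∧
    ∃ e : S, e * e = e ∧ ∀ f : S, f * f = f → f * e = f → e * f = f → f = e

/-- If a minimal left ideal meets a left ideal, it is contained in it. -/
lemma aux_min_subset [Semigroup S] {K J : Set S} (hK : IsMinimalLeftIdeal K)
    (hJ : IsLeftIdeal J) (h : (K ∩ J).Nonempty) : K ⊆ J := by
  have hKJ : IsLeftIdeal (K ∩ J) :=
    ⟨h, fun s x hx => ⟨hK.1.1.2 s x hx.1, hJ.2 s x hx.2⟩⟩
  have hEq := hK.2 _ hKJ Set.inter_subset_left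
  intro x hx
  rw [← hEq] at hx
  exact hx.2

/-- A right translate of a minimal left ideal is a minimal left ideal (provided some
nontrivial left ideal exists). -/
lemma aux_mul_min [Semigroup S] {L N : Set S} (hL : IsMinimalLeftIdeal L)
    (hN : IsNontrivialLeftIdeal N) (s : S) :
    IsMinimalLeftIdeal ((fun x => x * s) '' L) := by
  set Ls := (fun x => x * s) '' L with hLsdef
  have hli : IsLeftIdeal Ls := by
    refine ⟨hL.1.1.1.image _, ?_⟩
    rintro t _ ⟨x, hx, rfl⟩
    exact ⟨t * x, hL.1.1.2 t x hx, show (t * x) * s = t * (x * s) from mul_assoc t x s⟩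
  have pull : ∀ J : Set S, IsLeftIdeal J → J ⊆ Ls → Ls ⊆ J := by
    intro J hJ hJL
    obtain ⟨j, hj⟩ := hJ.1
    obtain ⟨x0, hx0, hx0j⟩ := hJL hj
    set L' := {x ∈ L | x * s ∈ J} with hL'def
    have hL'li : IsLeftIdeal L' := by
      have hx0j' : x0 * s = j := hx0j
      refine ⟨⟨x0, hx0, by rw [hx0j']; exact hj⟩, ?_⟩
      intro t x hx
      exact ⟨hL.1.1.2 t x hx.1, by rw [mul_assoc]; exact hJ.2 t _ hx.2⟩
    have hEq : L' = L := hL.2 _ hL'li (fun x hx => hx.1)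
    rintro _ ⟨x, hx, rfl⟩
    rw [← hEq] at hx
    exact hx.2
  have hneu : Ls ≠ Set.univ := by
    intro h
    apply hN.2
    have hsub : Ls ⊆ N := pull N hN.1 (by rw [h]; exact Set.subset_univ N)
    rw [h] at hsub
    exact Set.eq_univ_of_univ_subset hsub
  exact ⟨⟨hli, hneu⟩, fun J hJ hsub => hsub.antisymm (pull J hJ hsub)⟩

/-- The number of nonempty proper subsets of a finite set is even. -/
lemma aux_even_card_ssub {α : Type*} [Fintype α] [DecidableEq α] (A : Finset α) :
    Even ((Finset.univ.filter (fun B : Finset α => B ⊂ A ∧ B.Nonempty)).card) := by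
  classical
  rcases A.eq_empty_or_nonempty with rfl | hA
  · have : (Finset.univ.filter (fun B : Finset α => B ⊂ ∅ ∧ B.Nonempty)) = ∅ := by
      ext B
      simp only [Finset.mem_filter, Finset.mem_univ, true_and, Finset.notMem_empty, iff_false]
      rintro ⟨h, -⟩
      exact absurd h (by simp)
    simp [this]
  · have hset : Finset.univ.filter (fun B : Finset α => B ⊂ A ∧ B.Nonempty)
        = (A.powerset.erase A).erase ∅ := by
      ext B
      simp only [Finset.mem_filter, Finset.mem_univ, true_and, Finset.mem_erase,
        Finset.mem_powerset, Finset.ssubset_iff_subset_ne, Finset.nonempty_iff_ne_empty]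
      tauto
    rw [hset, Finset.card_erase_of_mem, Finset.card_erase_of_mem, Finset.card_powerset]
    · have h2 : 2 ≤ 2 ^ A.card := by
        calc 2 = 2 ^ 1 := by norm_num
        _ ≤ 2 ^ A.card := Nat.pow_le_pow_right (by norm_num) hA.card_pos
      obtain ⟨r, hr⟩ := (Nat.even_pow.2 ⟨even_two, hA.card_pos.ne'⟩ : Even (2 ^ A.card))
      exact ⟨r - 1, by omega⟩
    · exact Finset.mem_powerset_self A
    · exact Finset.mem_erase.2 ⟨hA.ne_empty.symm, Finset.mem_powerset.2 (Finset.empty_subset A)⟩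

/-- For a completely simple semigroup with `n ≥ 3` minimal left ideals, every vertex of
`In(S)` has even degree (so, being connected, `In(S)` is Eulerian). -/
theorem stmt17 [Semigroup S] (hS : IsCompletelySimple S) (n : ℕ) (hn : 3 ≤ n)
    (I : Fin n → Set S) (hinj : Function.Injective I)
    (hmin : ∀ i, IsMinimalLeftIdeal (I i))
    (hall : ∀ J : Set S, IsMinimalLeftIdeal J → ∃ i, J = I i) :
    ∀ v : IdealVert S, Even (((inclusionIdealGraph S).neighborSet v).ncard) := by
  classical
  have hnpos : 0 < n := by omega
  set i0 : Fin n := ⟨0, hnpos⟩ with hi0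
  have hNT : IsNontrivialLeftIdeal (I i0) := (hmin i0).1
  -- every element lies in some minimal left ideal
  have cover : ∀ a : S, ∃ i, a ∈ I i := by
    have hT : IsIdeal (⋃ i, I i) := by
      obtain ⟨a0, ha0⟩ := hNT.1.1
      refine ⟨⟨a0, Set.mem_iUnion.2 ⟨i0, ha0⟩⟩, ?_, ?_⟩
      · intro s x hx
        obtain ⟨i, hi⟩ := Set.mem_iUnion.1 hx
        exact Set.mem_iUnion.2 ⟨i, (hmin i).1.1.2 s x hi⟩
      · intro s x hx
        obtain ⟨i, hi⟩ := Set.mem_iUnion.1 hx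
        obtain ⟨j, hj⟩ := hall _ (aux_mul_min (hmin i) hNT s)
        refine Set.mem_iUnion.2 ⟨j, ?_⟩
        rw [← hj]
        exact ⟨x, hi, rfl⟩
    intro a
    have hTu := hS.1 _ hT
    have : a ∈ ⋃ i, I i := by rw [hTu]; trivial
    exact Set.mem_iUnion.1 this
  -- distinct minimal left ideals are disjoint
  have hIeq : ∀ i j : Fin n, (I i ∩ I j).Nonempty → i = j := by
    intro i j h
    exact hinj ((hmin j).2 _ (hmin i).1.1 (aux_min_subset (hmin i) (hmin j).1.1 h))
  -- the union map from finsets of indices to sets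
  set U : Finset (Fin n) → Set S := fun B => ⋃ i ∈ B, I i with hUdef
  have memU : ∀ (j : Fin n) (B : Finset (Fin n)), I j ⊆ U B ↔ j ∈ B := by
    intro j B
    constructor
    · intro h
      obtain ⟨a, ha⟩ := (hmin j).1.1.1
      obtain ⟨i, hiB, hai⟩ := Set.mem_iUnion₂.1 (h ha)
      rwa [hIeq j i ⟨a, ha, hai⟩]
    · intro hj a ha
      exact Set.mem_iUnion₂.2 ⟨j, hj, ha⟩
  have memUa : ∀ (a : S) (B : Finset (Fin n)), a ∈ U B ↔ ∃ i ∈ B, a ∈ I i := by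
    intro a B
    simp [hUdef]
  have Usub : ∀ B C : Finset (Fin n), U B ⊆ U C ↔ B ⊆ C := by
    intro B C
    constructor
    · intro h j hj
      exact (memU j C).1 (((memU j B).2 hj).trans h)
    · intro h a ha
      obtain ⟨i, hiB, hai⟩ := (memUa a B).1 ha
      exact (memUa a C).2 ⟨i, h hiB, hai⟩
  have Ussub : ∀ B C : Finset (Fin n), U B ⊂ U C ↔ B ⊂ C := by
    intro B C
    rw [Set.ssubset_def, Finset.ssubset_def, Usub, Usub]
  have Uuniv : U Finset.univ = Set.univ := by
    apply Set.eq_univ_of_forall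
    intro a
    obtain ⟨i, hi⟩ := cover a
    exact (memUa a _).2 ⟨i, Finset.mem_univ i, hi⟩
  -- U B is a nontrivial left ideal for nonempty proper B
  have Uvert : ∀ B : Finset (Fin n), B.Nonempty → B ≠ Finset.univ →
      IsNontrivialLeftIdeal (U B) := by
    intro B hBne hBu
    refine ⟨⟨?_, ?_⟩, ?_⟩
    · obtain ⟨i, hi⟩ := hBne
      obtain ⟨a, ha⟩ := (hmin i).1.1.1
      exact ⟨a, (memUa a B).2 ⟨i, hi, ha⟩⟩
    · intro s x hx
      obtain ⟨i, hiB, hxi⟩ := (memUa x B).1 hx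
      exact (memUa _ B).2 ⟨i, hiB, (hmin i).1.1.2 s x hxi⟩
    · intro h
      obtain ⟨j, hj⟩ : ∃ j, j ∉ B := by
        by_contra h'
        push_neg at h'
        exact hBu (Finset.eq_univ_iff_forall.2 h')
      obtain ⟨a, ha⟩ := (hmin j).1.1.1
      have : a ∈ U B := by rw [h]; trivial
      obtain ⟨i, hiB, hai⟩ := (memUa a B).1 this
      exact hj (hIeq j i ⟨a, ha, hai⟩ ▸ hiB)
  -- every nontrivial left ideal is the union of the minimal ideals it contains
  set f : IdealVert S → Finset (Fin n) :=
    fun w => Finset.univ.filter (fun i => I i ⊆ w.1) with hfdef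
  have frep : ∀ w : IdealVert S, w.1 = U (f w) := by
    intro w
    apply Set.Subset.antisymm
    · intro a ha
      obtain ⟨i, hi⟩ := cover a
      have hsub : I i ⊆ w.1 := aux_min_subset (hmin i) w.2.1 ⟨a, hi, ha⟩
      exact (memUa a _).2 ⟨i, Finset.mem_filter.2 ⟨Finset.mem_univ _, hsub⟩, hi⟩
    · intro a ha
      obtain ⟨i, hi, hai⟩ := (memUa a _).1 ha
      exact (Finset.mem_filter.1 hi).2 hai
  intro v
  set A : Finset (Fin n) := f v with hAdef
  have hvA : v.1 = U A := frep v
  have fne : ∀ w : IdealVert S, (f w).Nonempty := by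
    intro w
    obtain ⟨a, ha⟩ := w.2.1.1
    obtain ⟨i, hi⟩ := cover a
    exact ⟨i, Finset.mem_filter.2
      ⟨Finset.mem_univ _, aux_min_subset (hmin i) w.2.1 ⟨a, hi, ha⟩⟩⟩
  have fnu : ∀ w : IdealVert S, f w ≠ Finset.univ := by
    intro w h
    apply w.2.2
    rw [frep w, h, Uuniv]
  have fUB : ∀ (B : Finset (Fin n)) (hB : IsNontrivialLeftIdeal (U B)),
      f ⟨U B, hB⟩ = B := by
    intro B hB
    ext i
    simp only [hfdef, Finset.mem_filter, Finset.mem_univ, true_and]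
    exact memU i B
  set P : Finset (Fin n) → Prop :=
    fun B => (B ⊂ A ∧ B.Nonempty) ∨ (A ⊂ B ∧ B ≠ Finset.univ) with hPdef
  have hinjOn : Set.InjOn f ((inclusionIdealGraph S).neighborSet v) := by
    intro w1 _ w2 _ h
    exact Subtype.ext (by rw [frep w1, frep w2, h])
  have himg : f '' ((inclusionIdealGraph S).neighborSet v) = {B | P B} := by
    ext B
    simp only [Set.mem_image, Set.mem_setOf_eq]
    constructor
    · rintro ⟨w, hw, rfl⟩
      rw [SimpleGraph.mem_neighborSet, inclusionIdealGraph,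
        SimpleGraph.fromRel_adj] at hw
      rcases hw.2 with h | h
      · rw [hvA, frep w] at h
        exact Or.inr ⟨(Ussub _ _).1 h, fnu w⟩
      · rw [hvA, frep w] at h
        exact Or.inl ⟨(Ussub _ _).1 h, fne w⟩
    · rintro (⟨hBA, hBne⟩ | ⟨hAB, hBu⟩)
      · have hBu : B ≠ Finset.univ := by
          rintro rfl
          exact hBA.ne (Finset.univ_subset_iff.1 hBA.subset).symm
        refine ⟨⟨U B, Uvert B hBne hBu⟩, ?_, fUB B _⟩
        show v ≠ (⟨U B, Uvert B hBne hBu⟩ : IdealVert S) ∧ (v.1 ⊂ U B ∨ U B ⊂ v.1)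
        constructor
        · intro h
          have h1 : v.1 = U B := congrArg Subtype.val h
          rw [hvA] at h1
          exact hBA.ne (((Usub B A).1 h1.symm.le).antisymm ((Usub A B).1 h1.le))
        · exact Or.inr (by rw [hvA]; exact (Ussub B A).2 hBA)
      · have hBne : B.Nonempty := (fne v).mono hAB.subset
        refine ⟨⟨U B, Uvert B hBne hBu⟩, ?_, fUB B _⟩
        show v ≠ (⟨U B, Uvert B hBne hBu⟩ : IdealVert S) ∧ (v.1 ⊂ U B ∨ U B ⊂ v.1)
        constructor
        · intro h
          have h1 : v.1 = U B := congrArg Subtype.val h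
          rw [hvA] at h1
          exact hAB.ne (((Usub A B).1 h1.le).antisymm ((Usub B A).1 h1.symm.le))
        · exact Or.inl (by rw [hvA]; exact (Ussub A B).2 hAB)
  rw [← Set.ncard_image_of_injOn hinjOn, himg]
  have hfin : {B | P B} = (↑(Finset.univ.filter P) : Set (Finset (Fin n))) := by
    ext B
    simp
  rw [hfin, Set.ncard_coe_finset]
  have hsplit : Finset.univ.filter P
      = Finset.univ.filter (fun B => B ⊂ A ∧ B.Nonempty)
        ∪ Finset.univ.filter (fun B => A ⊂ B ∧ B ≠ Finset.univ) := by
    ext B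
    simp only [hPdef, Finset.mem_filter, Finset.mem_union, Finset.mem_univ, true_and]
  rw [hsplit, Finset.card_union_of_disjoint]
  · refine (aux_even_card_ssub A).add ?_
    have hcard : (Finset.univ.filter
          (fun B : Finset (Fin n) => A ⊂ B ∧ B ≠ Finset.univ)).card
        = (Finset.univ.filter
          (fun B : Finset (Fin n) => B ⊂ Aᶜ ∧ B.Nonempty)).card := by
      refine Finset.card_bij' (fun B _ => Bᶜ) (fun B _ => Bᶜ) ?_ ?_ ?_ ?_
      · intro B hB
        simp only [Finset.mem_filter, Finset.mem_univ, true_and] at hB ⊢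
        refine ⟨Finset.compl_ssubset_compl.2 hB.1, ?_⟩
        rw [Finset.nonempty_iff_ne_empty]
        intro h
        exact hB.2 ((Finset.compl_eq_empty_iff B).1 h)
      · intro B hB
        simp only [Finset.mem_filter, Finset.mem_univ, true_and] at hB ⊢
        constructor
        · have h := Finset.compl_ssubset_compl.2 hB.1
          rwa [compl_compl] at h
        · intro h
          exact hB.2.ne_empty ((Finset.compl_eq_univ_iff B).1 h)
      · intro B _
        exact compl_compl B
      · intro B _
        exact compl_compl B
    rw [hcard]
    exact aux_even_card_ssub Aᶜ
  · refine Finset.disjoint_filter.2 (fun B _ h1 h2 => ?_)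
    exact (Finset.ssubset_iff_subset_ne.1 (h1.1.trans h2.1)).2 rfl
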